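/- Let c_1 < ⋯ < c_m be distinct real numbers and let k be an integer with 2k > m. Then for every index i with m − k + 1 ≤ i ≤ k and every T ∈ ℝ, the number of indices j with |T − c_j| < |T − c_i| is at most k − 1; consequently i ∈ S_k(T), i.e., c_i is among the top k candidates of every voter regardless of the voter's position. -/

import Mathlib

/-- Candidate `i` is ranked above candidate `j` by a voter at position `T`:
either strictly closer, or tied in distance with the smaller index winning. -/
def prefers {m : ℕ} (c : Fin m → ℝ) (T : ℝ) (i j : Fin m) : Prop :=
  |T - c i| < |T - c j| ∨ (|T - c i| = |T - c j| ∧ i < j)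

noncomputable instance {m : ℕ} (c : Fin m → ℝ) (T : ℝ) (i j : Fin m) :
    Decidable (prefers c T i j) :=
  inferInstanceAs (Decidable (_ ∨ _))

/-- The set of indices of the `k` highest-ranked candidates for a voter at position `T`:
those with fewer than `k` candidates ranked above them. -/
noncomputable def topk {m : ℕ} (c : Fin m → ℝ) (T : ℝ) (k : ℕ) : Finset (Fin m) :=
  Finset.univ.filter fun i => (Finset.univ.filter fun j => prefers c T j i).card < k

/-- If `2k > m`, then every candidate with (1-based) index between `m − k + 1` and `k`
has at most `k − 1` candidates strictly closer to any position `T`, and is therefore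
among the top `k` candidates of every voter. -/
theorem middle_always_topk {m : ℕ} (c : Fin m → ℝ) (hc : StrictMono c)
    (k : ℕ) (hk : m < 2 * k) (i : Fin m)
    (h1 : m - k + 1 ≤ (i : ℕ) + 1) (h2 : (i : ℕ) + 1 ≤ k) (T : ℝ) :
    (Finset.univ.filter fun j => |T - c j| < |T - c i|).card ≤ k - 1 ∧
      i ∈ topk c T k := by

  have him : (i : ℕ) < m := i.isLt
  have hmk : m - k ≤ (i : ℕ) := by omega
  set d := |T - c i| with hd
  set A := Finset.univ.filter fun j => prefers c T j i with hAdef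
  have hiA : i ∉ A := by
    rw [hAdef, Finset.mem_filter]
    simp only [hAdef, Finset.mem_filter, Finset.mem_univ, true_and, prefers]
    push_neg
    exact ⟨le_refl _, le_refl _⟩
  -- every element of A is within distance d, strictly if index > i
  have hAle : ∀ j ∈ A, |T - c j| ≤ d := by
    intro j hj
    rw [hAdef, Finset.mem_filter] at hj
    simp only [hAdef, Finset.mem_filter, Finset.mem_univ, true_and, prefers] at hj
    rcases hj with h | ⟨h, _⟩
    · exact le_of_lt h
    · exact le_of_eq h
  have hAlt : ∀ j ∈ A, i < j → |T - c j| < d := by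
    intro j hj hij
    rw [hAdef, Finset.mem_filter] at hj
    simp only [hAdef, Finset.mem_filter, Finset.mem_univ, true_and, prefers] at hj
    rcases hj with h | ⟨_, h⟩
    · exact h
    · exact absurd hij (not_lt.mpr (le_of_lt h))
  -- A is entirely below i or entirely above i
  have hAcard : A.card ≤ k - 1 := by
    by_cases hex : ∃ j ∈ A, i < j
    · obtain ⟨j2, hj2A, hij2⟩ := hex
      have hj2d : |T - c j2| < d := hAlt j2 hj2A hij2
      have hsub : A ⊆ Finset.Ioi i := by
        intro j hj
        rw [Finset.mem_Ioi]
        rcases lt_trichotomy i j with h | h | h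
        · exact h
        · exact absurd hj (h ▸ hiA)
        · exfalso
          have hjd : |T - c j| ≤ d := hAle j hj
          have h1' : c j < c i := hc h
          have h2' : c i < c j2 := hc hij2
          have hb1 : T - d ≤ c j := by
            have := abs_le.mp hjd; linarith [this.2]
          have hb2 : c j2 < T + d := by
            have := abs_lt.mp hj2d; linarith [this.2]
          have : |T - c i| < d := by
            rw [abs_lt]; constructor <;> linarith
          exact absurd this (by rw [hd] at this ⊢; exact lt_irrefl _)
      calc A.card ≤ (Finset.Ioi i).card := Finset.card_le_card hsub
        _ = m - 1 - (i : ℕ) := Fin.card_Ioi i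
        _ ≤ k - 1 := by omega
    · push_neg at hex
      have hsub : A ⊆ Finset.Iio i := by
        intro j hj
        rw [Finset.mem_Iio]
        rcases lt_trichotomy j i with h | h | h
        · exact h
        · exact absurd hj (h ▸ hiA)
        · exact absurd h (not_lt.mpr (hex j hj))
      calc A.card ≤ (Finset.Iio i).card := Finset.card_le_card hsub
        _ = (i : ℕ) := Fin.card_Iio i
        _ ≤ k - 1 := by omega
  have hsubA : (Finset.univ.filter fun j => |T - c j| < |T - c i|) ⊆ A := by
    intro j hj
    simp only [Finset.mem_filter, Finset.mem_univ, true_and] at hj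
    rw [hAdef, Finset.mem_filter]
    simp only [hAdef, Finset.mem_filter, Finset.mem_univ, true_and, prefers]
    exact Or.inl hj
  constructor
  · exact le_trans (Finset.card_le_card hsubA) hAcard
  · simp only [topk, Finset.mem_filter, Finset.mem_univ, true_and]
    calc (Finset.univ.filter fun j => prefers c T j i).card = A.card := rfl
      _ ≤ k - 1 := hAcard
      _ < k := by omega
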